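/- Let τ > 0 and q ∈ (0,1]. On Ω = ℝ × ℝ equipped with the product measure μ = γ ⊗ γ of two standard Gaussians, define λ(ω₁,ω₂) = √q·ω₁ and ν(ω₁,ω₂) = λ(ω₁,ω₂) + √(1 − q)·ω₂, so that (ν, λ) is centered jointly Gaussian with Var ν = 1, Var λ = q and Cov(ν,λ) = q. Let F be the σ-algebra generated by λ. Then μ-almost everywhere, μ[σ⋆(ν/τ) | F] = σ⋆( λ / √(τ² + 1 − q) ). In other words, the Bayes-optimal confidence f_bo := σ⋆(λ/√(τ² + 1 − q)) is perfectly calibrated with respect to the teacher confidence σ⋆(ν/τ): Δ_p(f_bo) = 0 for all p ∈ (0,1). -/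

import Mathlib

open MeasureTheory ProbabilityTheory Real
open scoped NNReal ENNReal

noncomputable def erf (x : ℝ) : ℝ := 2 / Real.sqrt Real.pi * ∫ t in (0:ℝ)..x, Real.exp (-t ^ 2)
noncomputable def erfc (x : ℝ) : ℝ := 1 - erf x
noncomputable def sigmaStar (x : ℝ) : ℝ := (1 / 2) * erfc (-x / Real.sqrt 2)

noncomputable def stdPdf (t : ℝ) : ℝ := (Real.sqrt (2 * π))⁻¹ * Real.exp (-t ^ 2 / 2)

lemma erf_neg (x : ℝ) : erf (-x) = - erf x := by
  unfold erf
  have h := intervalIntegral.integral_comp_neg (a := (0:ℝ)) (b := x) (fun t => Real.exp (-t^2))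
  simp only [neg_neg, neg_zero, even_two, Even.neg_pow] at h
  have h2 : (∫ t in (0:ℝ)..(-x), Real.exp (-t ^ 2)) = - ∫ t in (0:ℝ)..x, Real.exp (-t^2) := by
    rw [h]; exact intervalIntegral.integral_symm (-x) 0
  rw [h2, mul_neg]

lemma sigmaStar_eq (x : ℝ) : sigmaStar x = 1/2 + (Real.sqrt π)⁻¹ * ∫ u in (0:ℝ)..(x / Real.sqrt 2), Real.exp (-u^2) := by
  unfold sigmaStar erfc
  rw [neg_div, erf_neg]
  unfold erf
  ring

lemma integral_Iic_stdPdf (x : ℝ) : ∫ t in Set.Iic x, stdPdf t = sigmaStar x := by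
  have h2 : (0:ℝ) < Real.sqrt 2 := by positivity
  have hint : ∀ y : ℝ, IntegrableOn stdPdf (Set.Iic y) := by
    intro y
    apply Integrable.integrableOn
    unfold stdPdf
    apply Integrable.const_mul
    have : (fun t : ℝ => Real.exp (-t^2/2)) = fun t => Real.exp (-(1/2) * t^2) := by
      ext t; ring_nf
    rw [this]
    exact integrable_exp_neg_mul_sq (by norm_num)
  have hsplit : ∫ t in Set.Iic x, stdPdf t
      = (∫ t in Set.Iic (0:ℝ), stdPdf t) + ∫ t in (0:ℝ)..x, stdPdf t := by
    rw [← intervalIntegral.integral_Iic_sub_Iic (hint 0) (hint x)]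
    ring
  have hhalf : ∫ t in Set.Iic (0:ℝ), stdPdf t = 1/2 := by
    unfold stdPdf
    rw [MeasureTheory.integral_const_mul]
    have hneg := integral_comp_neg_Iic (0:ℝ) (fun s => Real.exp (-(1/2) * s^2))
    have : ∫ t in Set.Iic (0:ℝ), Real.exp (-t^2/2)
        = ∫ u in Set.Ioi (-(0:ℝ)), Real.exp (-(1/2) * u^2) := by
      rw [← hneg]; congr 1; ext t; ring_nf
    rw [this, neg_zero, integral_gaussian_Ioi]
    rw [show π / (1/2 : ℝ) = 2 * π by ring]
    rw [eq_div_iff (by norm_num), inv_mul_eq_div, div_mul_eq_mul_div, div_eq_iff (by positivity)]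
    rw [mul_comm, ← Real.sqrt_mul_self (by positivity : (0:ℝ) ≤ Real.sqrt (2*π))]
    ring
  have hiv : ∫ t in (0:ℝ)..x, stdPdf t
      = (Real.sqrt (2*π))⁻¹ * (Real.sqrt 2 * ∫ u in (0:ℝ)..(x / Real.sqrt 2), Real.exp (-u^2)) := by
    unfold stdPdf
    rw [intervalIntegral.integral_const_mul]
    congr 1
    have : ∀ t : ℝ, Real.exp (-t^2/2) = (fun u => Real.exp (-u^2)) (t / Real.sqrt 2) := by
      intro t
      simp only [div_pow, Real.sq_sqrt (by norm_num : (2:ℝ) ≥ 0)]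
      ring_nf
    rw [intervalIntegral.integral_congr (fun t _ => this t)]
    rw [intervalIntegral.integral_comp_div (fun u => Real.exp (-u^2)) (ne_of_gt h2)]
    simp [smul_eq_mul]
  rw [hsplit, hhalf, hiv, sigmaStar_eq]
  have : (Real.sqrt (2*π))⁻¹ * Real.sqrt 2 = (Real.sqrt π)⁻¹ := by
    rw [Real.sqrt_mul (by norm_num) π]
    field_simp
  rw [← mul_assoc, this]

lemma integrable_stdPdf : Integrable stdPdf := by
  unfold stdPdf
  apply Integrable.const_mul
  have : (fun t : ℝ => Real.exp (-t^2/2)) = fun t => Real.exp (-(1/2) * t^2) := by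
    ext t; ring_nf
  rw [this]
  exact integrable_exp_neg_mul_sq (by norm_num)

lemma stdPdf_nonneg (t : ℝ) : 0 ≤ stdPdf t := by
  unfold stdPdf; positivity

lemma integral_stdPdf : ∫ t, stdPdf t = 1 := by
  unfold stdPdf
  rw [MeasureTheory.integral_const_mul]
  have : (fun t : ℝ => Real.exp (-t^2/2)) = fun t => Real.exp (-(1/2) * t^2) := by
    ext t; ring_nf
  rw [this, integral_gaussian]
  rw [show π / (1/2 : ℝ) = 2 * π by ring]
  rw [inv_mul_cancel₀ (by positivity)]

lemma sigmaStar_nonneg (x : ℝ) : 0 ≤ sigmaStar x := by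
  rw [← integral_Iic_stdPdf]
  exact setIntegral_nonneg measurableSet_Iic (fun t _ => stdPdf_nonneg t)

lemma sigmaStar_le_one (x : ℝ) : sigmaStar x ≤ 1 := by
  rw [← integral_Iic_stdPdf, ← integral_stdPdf]
  apply setIntegral_le_integral integrable_stdPdf
  exact ae_of_all _ (fun t => stdPdf_nonneg t)

lemma monotone_sigmaStar : Monotone sigmaStar := by
  intro x y hxy
  rw [← integral_Iic_stdPdf, ← integral_Iic_stdPdf]
  apply setIntegral_mono_set integrable_stdPdf.integrableOn
    (ae_of_all _ (fun t => stdPdf_nonneg t))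
  exact HasSubset.Subset.eventuallyLE (Set.Iic_subset_Iic.mpr hxy)

lemma measurable_sigmaStar : Measurable sigmaStar := monotone_sigmaStar.measurable

lemma measurable_stdPdf : Measurable stdPdf := by
  unfold stdPdf; fun_prop

/-- Affine substitution in an integral over `Iic`. -/
lemma integral_Iic_comp_affine {f : ℝ → ℝ} (hf : Measurable f) {s : ℝ} (hs : 0 < s) (d b : ℝ) :
    ∫ u in Set.Iic b, f ((u + d) / s) = s * ∫ t in Set.Iic ((b + d) / s), f t := by
  set T : ℝ → ℝ := fun t => s * t - d with hT
  have hTmeas : Measurable T := by fun_prop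
  have hmap : Measure.map T volume = ENNReal.ofReal s⁻¹ • volume := by
    have : T = (fun x => x + -d) ∘ (fun x => s * x) := by ext t; simp [hT]; ring
    rw [this, ← Measure.map_map (by fun_prop) (by fun_prop)]
    rw [Real.map_volume_mul_left (ne_of_gt hs)]
    rw [Measure.map_smul, map_add_right_eq_self]
    rw [abs_of_pos (by positivity)]
  have hpre : T ⁻¹' (Set.Iic b) = Set.Iic ((b + d) / s) := by
    ext t
    simp only [Set.mem_preimage, Set.mem_Iic, hT]
    rw [le_div_iff₀ hs]
    constructor <;> intro h <;> nlinarith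
  have key : ∫ u, f ((u + d) / s) ∂((Measure.map T volume).restrict (Set.Iic b))
      = ∫ t in Set.Iic ((b + d) / s), f t := by
    rw [Measure.restrict_map hTmeas measurableSet_Iic, hpre]
    have hfm : AEStronglyMeasurable (fun u : ℝ => f ((u + d) / s)) (Measure.map T (volume.restrict (Set.Iic ((b + d) / s)))) :=
      (hf.comp (by fun_prop : Measurable fun u : ℝ => (u + d) / s)).aestronglyMeasurable
    rw [integral_map hTmeas.aemeasurable hfm]
    congr 1; ext t
    congr 1
    field_simp [hT]
    simp only [hT]; ring
  rw [hmap, Measure.restrict_smul, integral_smul_measure, ENNReal.toReal_ofReal (by positivity),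
    smul_eq_mul] at key
  rw [← key]
  rw [← mul_assoc, mul_inv_cancel₀ (ne_of_gt hs), one_mul]

lemma conv_pdf {τ c : ℝ} (hτ : 0 < τ) (hc : 0 ≤ c) (u : ℝ) :
    ∫ y, stdPdf y * (τ⁻¹ * stdPdf ((u + c * y) / τ))
      = (Real.sqrt (2 * π * (τ ^ 2 + c ^ 2)))⁻¹ * Real.exp (-u ^ 2 / (2 * (τ ^ 2 + c ^ 2))) := by
  set v : ℝ := τ ^ 2 + c ^ 2 with hv
  have hv0 : 0 < v := by positivity
  set b : ℝ := v / τ ^ 2 / 2 with hb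
  have hb0 : 0 < b := by positivity
  set m : ℝ := c * u / v with hm
  have step1 : ∀ y : ℝ, stdPdf y * (τ⁻¹ * stdPdf ((u + c * y) / τ))
      = ((2 * π)⁻¹ * τ⁻¹ * Real.exp (-u ^ 2 / (2 * v))) * Real.exp (-b * (y + m) ^ 2) := by
    intro y
    unfold stdPdf
    rw [show (Real.sqrt (2*π))⁻¹ * Real.exp (-y^2/2) * (τ⁻¹ * ((Real.sqrt (2*π))⁻¹ * Real.exp (-((u+c*y)/τ)^2/2)))
        = ((Real.sqrt (2*π))⁻¹ * (Real.sqrt (2*π))⁻¹) * τ⁻¹ * (Real.exp (-y^2/2) * Real.exp (-((u+c*y)/τ)^2/2)) by ring]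
    rw [← Real.exp_add]
    have hs : (Real.sqrt (2*π))⁻¹ * (Real.sqrt (2*π))⁻¹ = (2*π)⁻¹ := by
      rw [← mul_inv, Real.mul_self_sqrt (by positivity)]
    rw [hs]
    rw [show (2*π)⁻¹ * τ⁻¹ * Real.exp (-u^2/(2*v)) * Real.exp (-b*(y+m)^2)
        = (2*π)⁻¹ * τ⁻¹ * (Real.exp (-u^2/(2*v)) * Real.exp (-b*(y+m)^2)) by ring, ← Real.exp_add]
    congr 1
    congr 1
    rw [hb, hm, hv]
    field_simp
    ring
  rw [show (fun y => stdPdf y * (τ⁻¹ * stdPdf ((u + c * y) / τ)))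
      = fun y => ((2 * π)⁻¹ * τ⁻¹ * Real.exp (-u ^ 2 / (2 * v))) * Real.exp (-b * (y + m) ^ 2) from funext step1]
  rw [MeasureTheory.integral_const_mul]
  have h2 : ∫ y : ℝ, Real.exp (-b * (y + m) ^ 2) = ∫ y : ℝ, Real.exp (-b * y ^ 2) :=
    integral_add_right_eq_self (fun y => Real.exp (-b * y ^ 2)) m
  rw [h2, integral_gaussian]
  have hpib : π / b = 2 * π * τ ^ 2 / v := by
    rw [hb]; field_simp
  rw [hpib]
  rw [show 2 * π * τ ^ 2 / v = (2 * π / v) * τ ^ 2 by ring, Real.sqrt_mul (by positivity),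
    Real.sqrt_sq hτ.le, Real.sqrt_div (by positivity : (0:ℝ) ≤ 2 * π) v,
    Real.sqrt_mul (by positivity : (0:ℝ) ≤ 2 * π) v]
  have h1 : Real.sqrt (2*π) * Real.sqrt (2*π) = 2*π := Real.mul_self_sqrt (by positivity)
  have h2 : Real.sqrt v * Real.sqrt v = v := Real.mul_self_sqrt hv0.le
  have hs1 : (0:ℝ) < Real.sqrt (2*π) := by positivity
  have hs2 : (0:ℝ) < Real.sqrt v := by positivity
  rw [mul_inv]
  generalize hS : Real.sqrt (2*π) = S at *
  generalize hV : Real.sqrt v = V at *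
  field_simp
  linear_combination h1

lemma integrable_stdPdf_affine {s : ℝ} (hs : 0 < s) (d : ℝ) :
    Integrable (fun u : ℝ => stdPdf ((u + d) / s)) := by
  have h1 : Integrable (fun u : ℝ => stdPdf (u / s)) := integrable_stdPdf.comp_div (ne_of_gt hs)
  have h2 := h1.comp_add_right d
  simpa using h2

lemma vpdf_Iic {v : ℝ} (hv : 0 < v) (a : ℝ) :
    ∫ u in Set.Iic a, (Real.sqrt (2 * π * v))⁻¹ * Real.exp (-u ^ 2 / (2 * v))
      = sigmaStar (a / Real.sqrt v) := by
  have hsv : 0 < Real.sqrt v := by positivity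
  have heq : ∀ u : ℝ, (Real.sqrt (2 * π * v))⁻¹ * Real.exp (-u ^ 2 / (2 * v))
      = (Real.sqrt v)⁻¹ * stdPdf ((u + 0) / Real.sqrt v) := by
    intro u
    unfold stdPdf
    rw [add_zero, div_pow, Real.sq_sqrt hv.le,
      show 2 * π * v = (2 * π) * v by ring, Real.sqrt_mul (by positivity) v, mul_inv]
    rw [show -(u ^ 2 / v) / 2 = -u ^ 2 / (2 * v) by ring]
    ring
  rw [setIntegral_congr_fun measurableSet_Iic (fun u _ => heq u)]
  rw [MeasureTheory.integral_const_mul, integral_Iic_comp_affine measurable_stdPdf hsv 0 a,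
    ← mul_assoc, inv_mul_cancel₀ (ne_of_gt hsv), one_mul, add_zero, integral_Iic_stdPdf]

lemma stdPdf_eq (x : ℝ) : gaussianPDFReal 0 1 x = stdPdf x := by
  unfold stdPdf
  rw [gaussianPDFReal_def]
  norm_num

lemma integral_gaussianReal_eq (g : ℝ → ℝ) :
    ∫ x, g x ∂(gaussianReal 0 1) = ∫ x, stdPdf x * g x := by
  rw [gaussianReal_of_var_ne_zero 0 one_ne_zero]
  have hpdf : (gaussianPDF 0 1) = fun x => ((Real.toNNReal (gaussianPDFReal 0 1 x) : ℝ≥0) : ℝ≥0∞) := by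
    ext x; rfl
  rw [hpdf, integral_withDensity_eq_integral_smul
    ((measurable_gaussianPDFReal 0 1).real_toNNReal) g]
  congr 1
  ext x
  rw [NNReal.smul_def, smul_eq_mul, Real.coe_toNNReal _ (gaussianPDFReal_nonneg 0 1 x), stdPdf_eq]

lemma key_integral {τ c : ℝ} (hτ : 0 < τ) (hc : 0 ≤ c) (a : ℝ) :
    ∫ y, sigmaStar ((a + c * y) / τ) ∂(gaussianReal 0 1)
      = sigmaStar (a / Real.sqrt (τ ^ 2 + c ^ 2)) := by
  rw [integral_gaussianReal_eq]
  have hrepr : ∀ y : ℝ, sigmaStar ((a + c * y) / τ)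
      = ∫ u in Set.Iic a, τ⁻¹ * stdPdf ((u + c * y) / τ) := by
    intro y
    rw [MeasureTheory.integral_const_mul, integral_Iic_comp_affine measurable_stdPdf hτ (c * y) a,
      ← mul_assoc, inv_mul_cancel₀ (ne_of_gt hτ), one_mul, integral_Iic_stdPdf]
  -- the two-variable integrand
  set f : ℝ → ℝ → ℝ := fun y u => stdPdf y * (τ⁻¹ * stdPdf ((u + c * y) / τ)) with hf
  have hfmeas : AEStronglyMeasurable (Function.uncurry f)
      (volume.prod (volume.restrict (Set.Iic a))) := by
    apply Measurable.aestronglyMeasurable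
    apply Measurable.mul
    · exact measurable_stdPdf.comp measurable_fst
    · exact (measurable_const.mul (measurable_stdPdf.comp (by fun_prop)))
  have hslice : ∀ y : ℝ, Integrable (f y) (volume.restrict (Set.Iic a)) := by
    intro y
    exact (((integrable_stdPdf_affine hτ (c * y)).const_mul τ⁻¹).const_mul (stdPdf y)).integrableOn
  have hnorm : ∀ y : ℝ, (∫ u in Set.Iic a, ‖f y u‖) = stdPdf y * sigmaStar ((a + c * y) / τ) := by
    intro y
    have : ∀ u : ℝ, ‖f y u‖ = stdPdf y * (τ⁻¹ * stdPdf ((u + c * y) / τ)) := by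
      intro u
      rw [hf, Real.norm_of_nonneg (mul_nonneg (stdPdf_nonneg y) (mul_nonneg (inv_nonneg.mpr hτ.le) (stdPdf_nonneg _)))]
    calc (∫ u in Set.Iic a, ‖f y u‖)
        = ∫ u in Set.Iic a, stdPdf y * (τ⁻¹ * stdPdf ((u + c * y) / τ)) :=
          setIntegral_congr_fun measurableSet_Iic (fun u _ => this u)
      _ = stdPdf y * ∫ u in Set.Iic a, τ⁻¹ * stdPdf ((u + c * y) / τ) :=
          MeasureTheory.integral_const_mul _ _
      _ = stdPdf y * sigmaStar ((a + c * y) / τ) := by rw [← hrepr]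
  have hint : Integrable (Function.uncurry f) (volume.prod (volume.restrict (Set.Iic a))) := by
    rw [integrable_prod_iff hfmeas]
    constructor
    · exact ae_of_all _ hslice
    · apply Integrable.mono' integrable_stdPdf
      · apply AEStronglyMeasurable.congr
          (f := fun y => stdPdf y * sigmaStar ((a + c * y) / τ))
        · exact (measurable_stdPdf.mul
            ((measurable_sigmaStar.comp (by fun_prop)))).aestronglyMeasurable
        · exact ae_of_all _ (fun y => (hnorm y).symm)
      · refine ae_of_all _ (fun y => ?_)
        simp only [Function.uncurry_apply_pair]
        rw [Real.norm_of_nonneg (setIntegral_nonneg measurableSet_Iic (fun u _ => norm_nonneg _)),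
          hnorm y]
        calc stdPdf y * sigmaStar ((a + c * y) / τ) ≤ stdPdf y * 1 :=
              mul_le_mul_of_nonneg_left (sigmaStar_le_one _) (stdPdf_nonneg y)
          _ = stdPdf y := mul_one _
  calc ∫ y, stdPdf y * sigmaStar ((a + c * y) / τ)
      = ∫ y, ∫ u in Set.Iic a, f y u := by
        congr 1; funext y
        rw [hrepr y, hf, ← MeasureTheory.integral_const_mul]
    _ = ∫ u in Set.Iic a, ∫ y, f y u := integral_integral_swap hint
    _ = ∫ u in Set.Iic a, (Real.sqrt (2 * π * (τ ^ 2 + c ^ 2)))⁻¹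
          * Real.exp (-u ^ 2 / (2 * (τ ^ 2 + c ^ 2))) :=
        setIntegral_congr_fun measurableSet_Iic (fun u _ => conv_pdf hτ hc u)
    _ = sigmaStar (a / Real.sqrt (τ ^ 2 + c ^ 2)) := vpdf_Iic (by positivity) a

/-- For a jointly Gaussian pair `(ν, λ)` with `Var ν = 1`, `Var λ = q`, `Cov(ν, λ) = q`,
realized on the product of two standard Gaussians, the conditional expectation of the teacher
confidence `σ⋆(ν/τ)` given `λ` is exactly the Bayes-optimal confidence `σ⋆(λ/√(τ² + 1 − q))`:
the Bayes-optimal classifier is perfectly calibrated. -/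
theorem condexp_teacher_given_bayes
    (τ q : ℝ) (hτ : 0 < τ) (hq : 0 < q) (hq1 : q ≤ 1)
    (μ : Measure (ℝ × ℝ)) (hμ : μ = (gaussianReal 0 1).prod (gaussianReal 0 1))
    (lam ν : ℝ × ℝ → ℝ)
    (hlam : lam = fun ω => Real.sqrt q * ω.1)
    (hν : ν = fun ω => lam ω + Real.sqrt (1 - q) * ω.2)
    (F : MeasurableSpace (ℝ × ℝ))
    (hF : F = MeasurableSpace.comap lam (inferInstance : MeasurableSpace ℝ)) :
    μ[(fun ω => sigmaStar (ν ω / τ)) | F]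
      =ᵐ[μ] fun ω => sigmaStar (lam ω / Real.sqrt (τ ^ 2 + 1 - q)) := by
  subst hμ hlam hν hF
  set γ : Measure ℝ := gaussianReal 0 1 with hγ
  set c : ℝ := Real.sqrt (1 - q) with hc
  have hc0 : 0 ≤ c := Real.sqrt_nonneg _
  have hc2 : c ^ 2 = 1 - q := Real.sq_sqrt (by linarith)
  have hvv : τ ^ 2 + c ^ 2 = τ ^ 2 + 1 - q := by rw [hc2]; ring
  set lam : ℝ × ℝ → ℝ := fun ω => Real.sqrt q * ω.1 with hlam
  have hlam_meas : Measurable lam := by fun_prop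
  have hm : MeasurableSpace.comap lam (inferInstance : MeasurableSpace ℝ)
      ≤ (inferInstance : MeasurableSpace (ℝ × ℝ)) := hlam_meas.comap_le
  set g : ℝ × ℝ → ℝ := fun ω => sigmaStar ((lam ω + c * ω.2) / τ) with hg
  set h : ℝ × ℝ → ℝ := fun ω => sigmaStar (lam ω / Real.sqrt (τ ^ 2 + 1 - q)) with hh
  have hg_meas : Measurable g :=
    measurable_sigmaStar.comp (by fun_prop)
  have hh_meas : Measurable h :=
    measurable_sigmaStar.comp (by fun_prop)
  have hbound : ∀ (φ : ℝ × ℝ → ℝ), Measurable φ → (∀ ω, 0 ≤ φ ω) → (∀ ω, φ ω ≤ 1) →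
      Integrable φ (γ.prod γ) := by
    intro φ hφ h0 h1
    apply Integrable.mono' (integrable_const (1 : ℝ)) hφ.aestronglyMeasurable
    exact ae_of_all _ (fun ω => by rw [Real.norm_of_nonneg (h0 ω)]; exact h1 ω)
  have hg_int : Integrable g (γ.prod γ) :=
    hbound g hg_meas (fun ω => sigmaStar_nonneg _) (fun ω => sigmaStar_le_one _)
  have hh_int : Integrable h (γ.prod γ) :=
    hbound h hh_meas (fun ω => sigmaStar_nonneg _) (fun ω => sigmaStar_le_one _)
  -- inner-integral identity
  have hkey : ∀ x : ℝ, ∫ y, sigmaStar ((Real.sqrt q * x + c * y) / τ) ∂γ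
      = sigmaStar (Real.sqrt q * x / Real.sqrt (τ ^ 2 + 1 - q)) := by
    intro x
    rw [hγ, key_integral hτ hc0 (Real.sqrt q * x), hvv]
  refine (ae_eq_condExp_of_forall_setIntegral_eq hm hg_int ?_ ?_ ?_).symm
  · intro s _ _
    exact hh_int.integrableOn
  · rintro s ⟨t, ht, rfl⟩ -
    set s' : Set ℝ := (fun x => Real.sqrt q * x) ⁻¹' t with hs'
    have hs'_meas : MeasurableSet s' := (measurable_const_mul _) ht
    have hset : lam ⁻¹' t = s' ×ˢ (Set.univ : Set ℝ) := by
      ext ω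
      simp [hs', hlam, Set.mem_preimage]
    have hrestrict : (γ.prod γ).restrict (lam ⁻¹' t) = (γ.restrict s').prod γ := by
      rw [hset, ← Measure.prod_restrict, Measure.restrict_univ]
    have hgint' : Integrable g ((γ.restrict s').prod γ) := by
      rw [← hrestrict]; exact hg_int.integrableOn
    have hhint' : Integrable h ((γ.restrict s').prod γ) := by
      rw [← hrestrict]; exact hh_int.integrableOn
    rw [show (∫ x in lam ⁻¹' t, h x ∂(γ.prod γ)) = ∫ x, h x ∂((γ.restrict s').prod γ) by
        rw [hrestrict],
      show (∫ x in lam ⁻¹' t, g x ∂(γ.prod γ)) = ∫ x, g x ∂((γ.restrict s').prod γ) by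
        rw [hrestrict]]
    rw [MeasureTheory.integral_prod _ hgint', MeasureTheory.integral_prod _ hhint']
    congr 1
    funext x
    have : ∫ y, g (x, y) ∂γ = sigmaStar (Real.sqrt q * x / Real.sqrt (τ ^ 2 + 1 - q)) := by
      rw [hg]; exact hkey x
    rw [this, hh]
    simp [hlam, integral_const]
  · refine StronglyMeasurable.aestronglyMeasurable ?_
    have : Measurable[MeasurableSpace.comap lam (inferInstance : MeasurableSpace ℝ)] h := by
      have hφ : Measurable (fun z : ℝ => sigmaStar (z / Real.sqrt (τ ^ 2 + 1 - q))) := by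
        exact measurable_sigmaStar.comp (by fun_prop)
      exact hφ.comp (comap_measurable lam)
    exact this.stronglyMeasurable
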